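/- Let 𝒳 be a nonempty set, let T ≥ 0, and let g_0, g_1, …, g_T : 𝒳 → ℝ. Suppose that for each t ∈ {0, 1, …, T} there exists x_{t+1} ∈ 𝒳 that minimizes the function x ↦ Σ_{s=0}^{t} g_s(x) over 𝒳. Then for every x ∈ 𝒳, Σ_{t=0}^{T} g_t(x) ≥ Σ_{t=0}^{T} g_t(x_{t+1}). -/

import Mathlib

/-- be-the-leader lemma. If for each `t ∈ {0, …, T}` the point `x (t+1) ∈ 𝒳`
minimizes `x ↦ ∑_{s=0}^{t} g s x` over `𝒳`, then for every `y ∈ 𝒳`,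
`∑_{t=0}^{T} g t y ≥ ∑_{t=0}^{T} g t (x (t+1))`. -/
theorem stmt_3
    {α : Type*} (X : Set α) (hX : X.Nonempty) (T : ℕ)
    (g : ℕ → α → ℝ) (x : ℕ → α)
    (hmin : ∀ t ≤ T, x (t + 1) ∈ X ∧
      ∀ y ∈ X, ∑ s ∈ Finset.range (t + 1), g s (x (t + 1)) ≤ ∑ s ∈ Finset.range (t + 1), g s y) :
    ∀ y ∈ X, ∑ t ∈ Finset.range (T + 1), g t y ≥ ∑ t ∈ Finset.range (T + 1), g t (x (t + 1)) := by
  induction T with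
  | zero =>
    intro y hy
    simpa using (hmin 0 le_rfl).2 y hy
  | succ T IH =>
    intro y hy
    have hmin' : ∀ t ≤ T, x (t + 1) ∈ X ∧
        ∀ y ∈ X, ∑ s ∈ Finset.range (t + 1), g s (x (t + 1)) ≤ ∑ s ∈ Finset.range (t + 1), g s y :=
      fun t ht => hmin t (ht.trans (Nat.le_succ T))
    have hlast := hmin (T + 1) le_rfl
    have hIH := IH hmin' (x (T + 2)) hlast.1
    calc ∑ t ∈ Finset.range (T + 2), g t (x (t + 1))
        = ∑ t ∈ Finset.range (T + 1), g t (x (t + 1)) + g (T + 1) (x (T + 2)) := by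
          rw [Finset.sum_range_succ]
      _ ≤ ∑ t ∈ Finset.range (T + 1), g t (x (T + 2)) + g (T + 1) (x (T + 2)) := by
          linarith [hIH]
      _ = ∑ t ∈ Finset.range (T + 2), g t (x (T + 2)) := (Finset.sum_range_succ _ _).symm
      _ ≤ ∑ t ∈ Finset.range (T + 2), g t y := hlast.2 y hy
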